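/- Both of the following hold: K·exp_q((a⁻¹/(q − q⁻¹))ψ) = exp_q((a⁻¹/(q − q⁻¹))ψ)·𝓜 and B·exp_q((a/(q − q⁻¹))ψ) = exp_q((a/(q − q⁻¹))ψ)·𝓜. -/

import Mathlib

noncomputable def qNum {𝕂 : Type*} [Field 𝕂] (q : 𝕂) (n : ℕ) : 𝕂 :=
  (q ^ n - q⁻¹ ^ n) / (q - q⁻¹)

noncomputable def qFact {𝕂 : Type*} [Field 𝕂] (q : 𝕂) (n : ℕ) : 𝕂 :=
  ∏ j ∈ Finset.range n, qNum q (j + 1)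

noncomputable def qExp {𝕂 : Type*} [Field 𝕂] {V : Type*} [AddCommGroup V] [Module 𝕂 V]
    (q : 𝕂) (N : ℕ) (T : Module.End 𝕂 V) : Module.End 𝕂 V :=
  ∑ n ∈ Finset.range N, (q ^ (n * (n - 1) / 2) / qFact q n) • T ^ n

noncomputable def qExpInv {𝕂 : Type*} [Field 𝕂] {V : Type*} [AddCommGroup V] [Module 𝕂 V]
    (q : 𝕂) (N : ℕ) (T : Module.End 𝕂 V) : Module.End 𝕂 V :=
  ∑ n ∈ Finset.range N, (q⁻¹ ^ (n * (n - 1) / 2) / qFact q n) • T ^ n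

lemma tri_succ (k : ℕ) : (k+1)*k/2 = k*(k-1)/2 + k := by
  rcases k with _ | j
  · rfl
  · have h : (j+1+1)*(j+1) = (j+1)*((j+1)-1) + (j+1)*2 := by
      simp only [Nat.add_sub_cancel]; ring
    rw [h, Nat.add_mul_div_right _ _ (by norm_num : (0:ℕ) < 2)]

lemma qexp_coef {𝕂 : Type*} [Field 𝕂] (q c : 𝕂) (hq : q ≠ 0)
    (k : ℕ) (hF : qFact q k ≠ 0) (hN : qNum q (k+1) ≠ 0) :
    (q^((k+1)*k/2)/qFact q (k+1)) * (q^2*c)^(k+1)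
      - (q*(q-q⁻¹)*c) * ((q^(k*(k-1)/2)/qFact q k) * (q^2*c)^k)
    = (q^((k+1)*k/2)/qFact q (k+1)) * c^(k+1) := by
  have hQ : q^(k+1) ≠ 0 := pow_ne_zero _ hq
  have hnum : q^(k+1) - q⁻¹^(k+1) ≠ 0 := fun h => hN (by rw [qNum, h, zero_div])
  have hE : q^(k+1)*q^(k+1) - 1 ≠ 0 := by
    intro h
    apply hnum
    have h2 : (q^(k+1))⁻¹ = q^(k+1) := (eq_inv_of_mul_eq_one_left (sub_eq_zero.mp h)).symm
    rw [inv_pow, h2, sub_self]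
  have hNform : qNum q (k+1) = (q^(k+1)*q^(k+1) - 1)/(q^(k+1)*(q-q⁻¹)) := by
    rw [qNum, inv_pow]
    field_simp
  have hF1 : qFact q (k+1) = qFact q k * qNum q (k+1) := by
    rw [qFact, qFact, Finset.prod_range_succ]
  rw [hF1, tri_succ, pow_add, hNform]
  field_simp
  have hX : (-1 + q^2*q^(k*2) : 𝕂) ≠ 0 := by
    convert hE using 1; ring
  ring_nf
  field_simp
  ring

lemma qExp_expand {𝕂 : Type*} [Field 𝕂] {V : Type*} [AddCommGroup V] [Module 𝕂 V]
    (q : 𝕂) (N : ℕ) (ψ : Module.End 𝕂 V) (c : 𝕂) :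
    qExp q N (c • ψ) = ∑ n ∈ Finset.range N,
      ((q ^ (n * (n - 1) / 2) / qFact q n) * c ^ n) • ψ ^ n := by
  simp [qExp, smul_pow, smul_smul]

lemma qexp_mul {𝕂 : Type*} [Field 𝕂] {V : Type*} [AddCommGroup V] [Module 𝕂 V]
    (q : 𝕂) (d : ℕ) (ψ : Module.End 𝕂 V) (hψnil : ψ ^ (d+1) = 0) (hq : q ≠ 0)
    (hF : ∀ n, n ≤ d → qFact q n ≠ 0) (hN : ∀ n, 1 ≤ n → n ≤ d → qNum q n ≠ 0)
    (c : 𝕂) :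
    qExp q (d+1) ((q^2*c) • ψ) * (1 - (q*(q-q⁻¹)*c) • ψ) = qExp q (d+1) (c • ψ) := by
  rw [qExp_expand, qExp_expand, Finset.sum_mul]
  have hterm : ∀ n : ℕ,
      (((q ^ (n * (n - 1) / 2) / qFact q n) * (q^2*c) ^ n) • ψ ^ n) * (1 - (q*(q-q⁻¹)*c) • ψ)
      = ((q ^ (n * (n - 1) / 2) / qFact q n) * (q^2*c) ^ n) • ψ ^ n
        - (((q ^ (n * (n - 1) / 2) / qFact q n) * (q^2*c) ^ n) * (q*(q-q⁻¹)*c)) • ψ ^ (n+1) := by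
    intro n
    rw [mul_sub, mul_one, smul_mul_assoc, mul_smul_comm, smul_smul, ← pow_succ]
  simp only [hterm]
  rw [Finset.sum_sub_distrib]
  rw [Finset.sum_range_succ (fun n => (((q ^ (n * (n - 1) / 2) / qFact q n) * (q^2*c) ^ n) * (q*(q-q⁻¹)*c)) • ψ ^ (n+1))]
  simp only [hψnil, smul_zero, add_zero]
  rw [Finset.sum_range_succ' (fun n => ((q ^ (n * (n - 1) / 2) / qFact q n) * (q^2*c) ^ n) • ψ ^ n) d]
  rw [Finset.sum_range_succ' (fun n => ((q ^ (n * (n - 1) / 2) / qFact q n) * c ^ n) • ψ ^ n) d]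
  have h0 : ((q ^ (0 * (0 - 1) / 2) / qFact q 0) * (q^2*c) ^ 0) • (ψ:Module.End 𝕂 V) ^ 0
      = ((q ^ (0 * (0 - 1) / 2) / qFact q 0) * c ^ 0) • (ψ:Module.End 𝕂 V) ^ 0 := by
    norm_num
  rw [h0, add_sub_right_comm]
  congr 1
  rw [← Finset.sum_sub_distrib]
  refine Finset.sum_congr rfl fun k hk => ?_
  rw [← sub_smul]
  congr 1
  have hk' : k < d := Finset.mem_range.mp hk
  have := qexp_coef q c hq k (hF k (le_of_lt hk')) (hN (k+1) (Nat.le_add_left 1 k) hk')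
  simp only [Nat.add_sub_cancel]
  linear_combination this

lemma mul_ringInverse_comm {R : Type*} [Ring R] {x p : R} (hp : IsUnit p) (h : x * p = p * x) :
    x * Ring.inverse p = Ring.inverse p * x := by
  have h1 : Ring.inverse p * p = 1 := Ring.inverse_mul_cancel _ hp
  have h2 : p * Ring.inverse p = 1 := Ring.mul_inverse_cancel _ hp
  calc x * Ring.inverse p = Ring.inverse p * p * (x * Ring.inverse p) := by rw [h1, one_mul]
    _ = Ring.inverse p * (p * x) * Ring.inverse p := by
        rw [mul_assoc, mul_assoc, mul_assoc]
    _ = Ring.inverse p * (x * p) * Ring.inverse p := by rw [h]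
    _ = Ring.inverse p * x * (p * Ring.inverse p) := by
        rw [mul_assoc, mul_assoc, mul_assoc]
    _ = Ring.inverse p * x := by rw [h2, mul_one]

theorem stmt_6
    {𝕂 : Type*} [Field 𝕂] {V : Type*} [AddCommGroup V] [Module 𝕂 V]
    [FiniteDimensional 𝕂 V]
    (d : ℕ) (hd : 1 ≤ d) (q a : 𝕂) (hq : q ≠ 0) (ha : a ≠ 0)
    (hq2 : ∀ i : ℕ, 1 ≤ i → i ≤ d → q ^ (2 * i) ≠ 1)
    (ha2 : ∀ i : ℤ, 1 - (d : ℤ) ≤ i → i ≤ (d : ℤ) - 1 → a ^ 2 ≠ q ^ (2 * i))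
    (K : Module.End 𝕂 V) (hK : IsUnit K)
    (U : ℕ → Submodule 𝕂 V)
    (hUne : ∀ i, i ≤ d → U i ≠ ⊥)
    (hUint : DirectSum.IsInternal (fun i : Fin (d + 1) => U i.1))
    (hKU : ∀ i, i ≤ d → ∀ v ∈ U i, K v = (q ^ ((d : ℤ) - 2 * (i : ℤ))) • v)
    (ψ : Module.End 𝕂 V)
    (hψ0 : ∀ v ∈ U 0, ψ v = 0)
    (hψU : ∀ i, 1 ≤ i → i ≤ d → ∀ v ∈ U i, ψ v ∈ U (i - 1))
    (hψnil : ψ ^ (d + 1) = 0)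
    (hKψ : K * ψ = q ^ 2 • (ψ * K))
    (hinv : ∀ x : 𝕂, IsUnit (1 - x • ψ))
    (B : Module.End 𝕂 V)
    (hB : B = (1 - (a * q) • ψ) * Ring.inverse (1 - (a⁻¹ * q) • ψ) * K)
    (M : Module.End 𝕂 V)
    (hM : M = (a - a⁻¹)⁻¹ • (a • K - a⁻¹ • B))
    (hMunit : IsUnit M):
    K * qExp q (d + 1) ((a⁻¹ / (q - q⁻¹)) • ψ)
      = qExp q (d + 1) ((a⁻¹ / (q - q⁻¹)) • ψ) * M ∧
    B * qExp q (d + 1) ((a / (q - q⁻¹)) • ψ)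
      = qExp q (d + 1) ((a / (q - q⁻¹)) • ψ) * M := by
  -- scalar facts
  have hq21 : q ^ 2 ≠ 1 := by simpa using hq2 1 le_rfl hd
  have hμ : q - q⁻¹ ≠ 0 := by
    intro h
    apply hq21
    have h' : q = q⁻¹ := sub_eq_zero.mp h
    rw [pow_two]
    nth_rewrite 2 [h']
    exact mul_inv_cancel₀ hq
  have hN : ∀ n, 1 ≤ n → n ≤ d → qNum q n ≠ 0 := by
    intro n h1 h2
    rw [qNum]
    apply div_ne_zero _ hμ
    intro h
    apply hq2 n h1 h2
    have h' : q ^ n = q⁻¹ ^ n := sub_eq_zero.mp h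
    rw [two_mul, pow_add]
    nth_rewrite 2 [h']
    rw [inv_pow]
    exact mul_inv_cancel₀ (pow_ne_zero _ hq)
  have hF : ∀ n, n ≤ d → qFact q n ≠ 0 := by
    intro n
    induction n with
    | zero => intro _; simp [qFact]
    | succ m ih =>
      intro h
      rw [qFact, Finset.prod_range_succ, ← qFact]
      exact mul_ne_zero (ih (le_trans (Nat.le_succ m) h)) (hN (m+1) (Nat.le_add_left 1 m) h)
  have haa : a - a⁻¹ ≠ 0 := by
    intro h
    have h0 : a ^ 2 ≠ (1:𝕂) := by
      have := ha2 0 (by omega) (by omega)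
      simpa using this
    apply h0
    have h' : a = a⁻¹ := sub_eq_zero.mp h
    rw [pow_two]
    nth_rewrite 2 [h']
    exact mul_inv_cancel₀ ha
  -- K commutation with powers of ψ
  have hKpow : ∀ n : ℕ, K * ψ ^ n = (q ^ (2*n)) • (ψ ^ n * K) := by
    intro n
    induction n with
    | zero => simp
    | succ m ih =>
      rw [pow_succ, ← mul_assoc, ih, smul_mul_assoc, mul_assoc, hKψ, mul_smul_comm,
        smul_smul, ← pow_add, ← mul_assoc, show 2*m+2 = 2*(m+1) by ring]
  have hKE : ∀ c : 𝕂, K * qExp q (d+1) (c • ψ) = qExp q (d+1) ((q^2*c) • ψ) * K := by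
    intro c
    rw [qExp_expand, qExp_expand, Finset.mul_sum, Finset.sum_mul]
    refine Finset.sum_congr rfl fun n _ => ?_
    rw [mul_smul_comm, hKpow n, smul_smul, smul_mul_assoc]
    congr 1
    ring
  -- the unit P and its inverse
  set P : Module.End 𝕂 V := 1 - (a⁻¹ * q) • ψ with hPdef
  set Q : Module.End 𝕂 V := 1 - (a * q) • ψ with hQdef
  have hPu : IsUnit P := hinv _
  have hPiP : P * Ring.inverse P = 1 := Ring.mul_inverse_cancel _ hPu
  have hiPP : Ring.inverse P * P = 1 := Ring.inverse_mul_cancel _ hPu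
  -- M = inverse P * K
  have hMeq : M = Ring.inverse P * K := by
    have hPQ : a • P - a⁻¹ • Q = (a - a⁻¹) • (1 : Module.End 𝕂 V) := by
      rw [hPdef, hQdef]
      module
    have key : a • K - a⁻¹ • (Q * Ring.inverse P * K) = (a - a⁻¹) • (Ring.inverse P * K) := by
      have h1 : K = P * (Ring.inverse P * K) := by rw [← mul_assoc, hPiP, one_mul]
      calc a • K - a⁻¹ • (Q * Ring.inverse P * K)
          = a • (P * (Ring.inverse P * K)) - a⁻¹ • (Q * (Ring.inverse P * K)) := by
            rw [← h1, mul_assoc]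
        _ = (a • P) * (Ring.inverse P * K) - (a⁻¹ • Q) * (Ring.inverse P * K) := by
            rw [smul_mul_assoc, smul_mul_assoc]
        _ = (a • P - a⁻¹ • Q) * (Ring.inverse P * K) := by
            rw [sub_mul (a • P) (a⁻¹ • Q) (Ring.inverse P * K)]
        _ = ((a - a⁻¹) • (1 : Module.End 𝕂 V)) * (Ring.inverse P * K) := by rw [hPQ]
        _ = (a - a⁻¹) • (Ring.inverse P * K) := by rw [smul_mul_assoc, one_mul]
    rw [hM, hB, key, smul_smul, inv_mul_cancel₀ haa, one_smul]
  -- commutation facts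
  have hcomψE : ∀ c : 𝕂, Commute ψ (qExp q (d+1) (c • ψ)) := by
    intro c
    rw [qExp_expand]
    exact Commute.sum_right _ _ _ fun n _ => (((Commute.refl ψ).pow_right n).smul_right _)
  have hcomPE : ∀ c : 𝕂, P * qExp q (d+1) (c • ψ) = qExp q (d+1) (c • ψ) * P := by
    intro c
    have : Commute (qExp q (d+1) (c • ψ)) P :=
      (Commute.one_right _).sub_right (((hcomψE c).symm).smul_right _)
    exact this.eq.symm
  have hcomQE : ∀ c : 𝕂, Q * qExp q (d+1) (c • ψ) = qExp q (d+1) (c • ψ) * Q := by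
    intro c
    have : Commute (qExp q (d+1) (c • ψ)) Q :=
      (Commute.one_right _).sub_right (((hcomψE c).symm).smul_right _)
    exact this.eq.symm
  have hcomQP : Q * P = P * Q := by
    rw [hPdef, hQdef]
    have : Commute ((1:Module.End 𝕂 V) - (a * q) • ψ) (1 - (a⁻¹ * q) • ψ) := by
      refine Commute.sub_left (Commute.sub_right (Commute.one_right _) ?_) ?_
      · exact (Commute.one_left _).smul_right _
      · exact Commute.sub_right ((Commute.one_right _).smul_left _)
          (((Commute.refl ψ).smul_left _).smul_right _)
    exact this.eq
  -- Claim 1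
  have hs1 : q*(q-q⁻¹)*(a⁻¹/(q-q⁻¹)) = a⁻¹ * q := by
    rw [show q*(q-q⁻¹)*(a⁻¹/(q-q⁻¹)) = a⁻¹*q*((q-q⁻¹)*(q-q⁻¹)⁻¹) from by ring,
      mul_inv_cancel₀ hμ, mul_one]
  have h2 : qExp q (d+1) ((q^2*(a⁻¹/(q-q⁻¹))) • ψ) * P = qExp q (d+1) ((a⁻¹/(q-q⁻¹)) • ψ) := by
    have := qexp_mul q d ψ hψnil hq hF hN (a⁻¹/(q-q⁻¹))
    rwa [hs1] at this
  have claim1 : K * qExp q (d + 1) ((a⁻¹ / (q - q⁻¹)) • ψ)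
      = qExp q (d + 1) ((a⁻¹ / (q - q⁻¹)) • ψ) * M := by
    rw [hKE, hMeq, ← h2, mul_assoc, ← mul_assoc P, hPiP, one_mul]
  -- Claim 2
  have hs2 : q*(q-q⁻¹)*(a/(q-q⁻¹)) = a * q := by
    rw [show q*(q-q⁻¹)*(a/(q-q⁻¹)) = a*q*((q-q⁻¹)*(q-q⁻¹)⁻¹) from by ring,
      mul_inv_cancel₀ hμ, mul_one]
  have h3 : qExp q (d+1) ((q^2*(a/(q-q⁻¹))) • ψ) * Q = qExp q (d+1) ((a/(q-q⁻¹)) • ψ) := by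
    have := qexp_mul q d ψ hψnil hq hF hN (a/(q-q⁻¹))
    rwa [hs2] at this
  have hcomQiP : Q * Ring.inverse P = Ring.inverse P * Q := mul_ringInverse_comm hPu hcomQP
  have hcomEiP : qExp q (d+1) ((a/(q-q⁻¹)) • ψ) * Ring.inverse P
      = Ring.inverse P * qExp q (d+1) ((a/(q-q⁻¹)) • ψ) :=
    mul_ringInverse_comm hPu (hcomPE _).symm
  have claim2 : B * qExp q (d + 1) ((a / (q - q⁻¹)) • ψ)
      = qExp q (d + 1) ((a / (q - q⁻¹)) • ψ) * M := by
    have hcomE'iP : qExp q (d+1) ((q^2*(a/(q-q⁻¹))) • ψ) * Ring.inverse P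
        = Ring.inverse P * qExp q (d+1) ((q^2*(a/(q-q⁻¹))) • ψ) :=
      mul_ringInverse_comm hPu (hcomPE _).symm
    rw [hB, hMeq, ← mul_assoc,
      mul_assoc (Q * Ring.inverse P) K, hKE, ← mul_assoc,
      mul_assoc Q (Ring.inverse P), ← hcomE'iP, ← mul_assoc, hcomQE, h3]
  exact ⟨claim1, claim2⟩
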